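/- arXiv:2602.20572 — 3 statements merged into one kernel-verified Lean document; each statement's English description precedes it below -/
import Mathlib

section
/- In the second-order chain rule for f̅ ∘ Φ_x, the correction term vanishes: if f̅ is a twice differentiable degree-0 homogeneous extension, then ∇²(f̅ ∘ Φ_x)(θ) = R_{Φ_x(θ)}^T ∇²f̅(Φ_x(θ)) R_{Φ_x(θ)}, because all nonzero second derivatives of Φ_x lie in radial directions annihilated by ∇f̅. -/
/-- Counterclockwise rotation by `π/2` in `ℝ²`. -/
noncomputable def Rrot (v : EuclideanSpace ℝ (Fin 2)) : EuclideanSpace ℝ (Fin 2) :=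
  (WithLp.equiv 2 (Fin 2 → ℝ)).symm ![-(v 1), v 0]

namespace S10

abbrev E := EuclideanSpace ℝ (Fin 2)

lemma Rrot0 (u : E) : Rrot u 0 = -(u 1) := by simp [Rrot]
lemma Rrot1 (u : E) : Rrot u 1 = u 0 := by simp [Rrot]

lemma Rrot_rot (a b : ℝ) (u : E) :
    Rrot (a • u + b • Rrot u) = a • Rrot u - b • u := by
  ext i
  fin_cases i <;>
    simp [Rrot0, Rrot1, PiLp.add_apply, PiLp.smul_apply, PiLp.sub_apply, smul_eq_mul] <;> ring

lemma comb_ne_zero (a b : ℝ) (hab : a ^ 2 + b ^ 2 = 1) (u : E) (hu : u ≠ 0) :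
    a • u + b • Rrot u ≠ 0 := by
  intro h
  apply hu
  have h0 := congrArg (fun z : E => z 0) h
  have h1 := congrArg (fun z : E => z 1) h
  simp [Rrot0, Rrot1, PiLp.add_apply, PiLp.smul_apply, smul_eq_mul] at h0 h1
  ext i
  fin_cases i
  · have : (a ^ 2 + b ^ 2) * u 0 = 0 := by linear_combination a * h0 + b * h1
    simpa [hab] using this
  · have : (a ^ 2 + b ^ 2) * u 1 = 0 := by linear_combination a * h1 - b * h0
    simpa [hab] using this

/-- The radial block-scaling map as a continuous linear map. -/
noncomputable def Lmap (d : ℕ) (z : Fin d → E) : (Fin d → ℝ) →L[ℝ] (Fin d → E) :=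
  ContinuousLinearMap.pi fun ℓ => (ContinuousLinearMap.proj ℓ).smulRight (z ℓ)

@[simp] lemma Lmap_apply (d : ℕ) (z : Fin d → E) (t : Fin d → ℝ) (ℓ : Fin d) :
    Lmap d z t ℓ = t ℓ • z ℓ := by simp [Lmap]

/-- `Lmap` bundled as a continuous linear map in the vector argument. -/
noncomputable def Λ (d : ℕ) : (Fin d → E) →L[ℝ] ((Fin d → ℝ) →L[ℝ] (Fin d → E)) :=
  LinearMap.toContinuousLinearMap
    { toFun := Lmap d
      map_add' := by
        intro z z'; ext t ℓ; simp [smul_add]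
      map_smul' := by
        intro c z; ext t ℓ; simp; ring }

@[simp] lemma Λ_apply (d : ℕ) (z : Fin d → E) : Λ d z = Lmap d z := rfl

/-- Euler's relation for a blockwise degree-0 homogeneous function. -/
lemma euler (d : ℕ) (fbar : (Fin d → E) → ℝ)
    (hhom : ∀ z : Fin d → E, (∀ ℓ, z ℓ ≠ 0) →
      ∀ t : Fin d → ℝ, (∀ ℓ, 0 < t ℓ) → fbar (fun ℓ => t ℓ • z ℓ) = fbar z)
    (z : Fin d → E) (hz : ∀ ℓ, z ℓ ≠ 0)
    (hdiff : DifferentiableAt ℝ fbar z) (c : Fin d → ℝ) :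
    fderiv ℝ fbar z (fun ℓ => c ℓ • z ℓ) = 0 := by
  set L := Lmap d z
  have hL1 : L (fun _ => 1) = z := by
    funext ℓ; simp [L]
  have hd' : HasFDerivAt fbar (fderiv ℝ fbar z) (L fun _ => 1) :=
    hL1 ▸ hdiff.hasFDerivAt
  have hcomp : HasFDerivAt (fbar ∘ L) ((fderiv ℝ fbar z).comp L)
      (fun _ => (1 : ℝ)) := hd'.comp _ L.hasFDerivAt
  have hopen : IsOpen {t : Fin d → ℝ | ∀ ℓ, 0 < t ℓ} := by
    have : {t : Fin d → ℝ | ∀ ℓ, 0 < t ℓ} = ⋂ ℓ, {t : Fin d → ℝ | 0 < t ℓ} := by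
      ext t; simp
    rw [this]
    exact isOpen_iInter_of_finite fun ℓ =>
      (isOpen_Ioi (a := (0:ℝ))).preimage (continuous_apply ℓ)
  have hev : (fbar ∘ L) =ᶠ[nhds (fun _ => (1 : ℝ))]
      (fun _ => fbar z) := by
    filter_upwards [hopen.mem_nhds (by intro ℓ; exact one_pos)] with t ht
    have hLt : L t = fun ℓ => t ℓ • z ℓ := funext fun ℓ => by simp [L]
    show fbar (L t) = fbar z
    rw [hLt]
    exact hhom z hz t ht
  have h0 : (fderiv ℝ fbar z).comp L = 0 := by
    rw [← hcomp.fderiv, hev.fderiv_eq]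
    exact fderiv_const_apply _
  have := congrArg (fun (M : (Fin d → ℝ) →L[ℝ] ℝ) => M c) h0
  have hLc : L c = fun ℓ => c ℓ • z ℓ := funext fun ℓ => by simp [L]
  rw [← hLc]
  simpa using this

lemma hasFDerivAt_blockwise (d : ℕ) (g : Fin d → ℝ → E) (g' : Fin d → E) (θ : Fin d → ℝ)
    (hg : ∀ ℓ, HasDerivAt (g ℓ) (g' ℓ) (θ ℓ)) :
    HasFDerivAt (fun θ' ℓ => g ℓ (θ' ℓ)) (Lmap d g') θ := by
  apply hasFDerivAt_pi''
  intro i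
  have h1 : HasFDerivAt (fun θ' : Fin d → ℝ => g i (θ' i))
      ((ContinuousLinearMap.smulRight (1 : ℝ →L[ℝ] ℝ) (g' i)).comp
        (ContinuousLinearMap.proj i)) θ :=
    ((hg i).hasFDerivAt).comp θ (hasFDerivAt_apply i θ)
  have h2 : (ContinuousLinearMap.smulRight (1 : ℝ →L[ℝ] ℝ) (g' i)).comp
      (ContinuousLinearMap.proj i)
      = (ContinuousLinearMap.proj i).comp (Lmap d g') := by
    ext t; simp
  rwa [h2] at h1

end S10

open S10 in
/-- in the second-order chain rule for `f̄ ∘ Φ_x` the correction term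
vanishes: for a twice differentiable degree-0 homogeneous extension `f̄`,
`∇²(f̄ ∘ Φ_x)(θ) = R_{Φ_x(θ)}ᵀ ∇²f̄(Φ_x(θ)) R_{Φ_x(θ)}` as bilinear forms. -/
theorem stmt_10 (d : ℕ)
    (fbar : (Fin d → EuclideanSpace ℝ (Fin 2)) → ℝ)
    (hhom : ∀ z : Fin d → EuclideanSpace ℝ (Fin 2), (∀ ℓ, z ℓ ≠ 0) →
      ∀ t : Fin d → ℝ, (∀ ℓ, 0 < t ℓ) → fbar (fun ℓ => t ℓ • z ℓ) = fbar z)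
    (hsmooth : ∀ z : Fin d → EuclideanSpace ℝ (Fin 2), (∀ ℓ, z ℓ ≠ 0) →
      ContDiffAt ℝ 2 fbar z)
    (x : Fin d → EuclideanSpace ℝ (Fin 2)) (hx : ∀ ℓ, ‖x ℓ‖ = 1)
    (θ : Fin d → ℝ) (v w : Fin d → ℝ) :
    fderiv ℝ (fderiv ℝ (fun θ' : Fin d → ℝ =>
        fbar fun ℓ => Real.cos (θ' ℓ) • x ℓ + Real.sin (θ' ℓ) • Rrot (x ℓ))) θ v w
      = fderiv ℝ (fderiv ℝ fbar)
          (fun ℓ => Real.cos (θ ℓ) • x ℓ + Real.sin (θ ℓ) • Rrot (x ℓ))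
          (fun ℓ => v ℓ • Rrot (Real.cos (θ ℓ) • x ℓ + Real.sin (θ ℓ) • Rrot (x ℓ)))
          (fun ℓ => w ℓ • Rrot (Real.cos (θ ℓ) • x ℓ + Real.sin (θ ℓ) • Rrot (x ℓ))) := by
  classical
  -- the map Φ and its blocks
  set Φ : (Fin d → ℝ) → (Fin d → E) :=
    fun θ' ℓ => Real.cos (θ' ℓ) • x ℓ + Real.sin (θ' ℓ) • Rrot (x ℓ) with hΦdef
  -- x ℓ is nonzero
  have hx0 : ∀ ℓ, x ℓ ≠ 0 := by
    intro ℓ h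
    have := hx ℓ
    rw [h] at this
    simp at this
  -- each block of Φ θ' is nonzero
  have hz : ∀ θ' : Fin d → ℝ, ∀ ℓ, Φ θ' ℓ ≠ 0 := fun θ' ℓ =>
    comb_ne_zero _ _ (Real.cos_sq_add_sin_sq (θ' ℓ)) (x ℓ) (hx0 ℓ)
  -- the first-derivative vectors ψ and second-derivative vectors
  set Ψ : (Fin d → ℝ) → (Fin d → E) :=
    fun θ' ℓ => Real.cos (θ' ℓ) • Rrot (x ℓ) - Real.sin (θ' ℓ) • x ℓ with hΨdef
  set B : (Fin d → ℝ) → ((Fin d → ℝ) →L[ℝ] (Fin d → E)) :=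
    fun θ' => Lmap d (Ψ θ') with hBdef
  -- Φ is differentiable with derivative B
  have hΦ : ∀ θ' : Fin d → ℝ, HasFDerivAt Φ (B θ') θ' := by
    intro θ'
    have key := hasFDerivAt_blockwise d
      (fun ℓ s => Real.cos s • x ℓ + Real.sin s • Rrot (x ℓ)) (Ψ θ') θ'
      (fun ℓ => by
        have h := ((Real.hasDerivAt_cos (θ' ℓ)).smul_const (x ℓ)).add
          ((Real.hasDerivAt_sin (θ' ℓ)).smul_const (Rrot (x ℓ)))
        have he : Ψ θ' ℓ = (-Real.sin (θ' ℓ)) • x ℓ + Real.cos (θ' ℓ) • Rrot (x ℓ) := by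
          simp [hΨdef, neg_smul, sub_eq_neg_add]
        rw [he]
        exact h)
    exact key
  -- Ψ is differentiable
  have hΨ : HasFDerivAt Ψ
      (Lmap d (fun ℓ => (-Real.sin (θ ℓ)) • Rrot (x ℓ) - Real.cos (θ ℓ) • x ℓ)) θ := by
    have key := hasFDerivAt_blockwise d
      (fun ℓ s => Real.cos s • Rrot (x ℓ) - Real.sin s • x ℓ)
      (fun ℓ => (-Real.sin (θ ℓ)) • Rrot (x ℓ) - Real.cos (θ ℓ) • x ℓ) θ
      (fun ℓ => ((Real.hasDerivAt_cos (θ ℓ)).smul_const (Rrot (x ℓ))).sub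
        ((Real.hasDerivAt_sin (θ ℓ)).smul_const (x ℓ)))
    exact key
  -- B is differentiable
  set B' : (Fin d → ℝ) →L[ℝ] ((Fin d → ℝ) →L[ℝ] (Fin d → E)) :=
    (Λ d).comp (Lmap d (fun ℓ => (-Real.sin (θ ℓ)) • Rrot (x ℓ) - Real.cos (θ ℓ) • x ℓ))
    with hB'def
  have hB : HasFDerivAt B B' θ := by
    have := ((Λ d).hasFDerivAt (x := Ψ θ)).comp θ hΨ
    exact this
  -- fbar is differentiable at Φ θ'
  have hdiff1 : ∀ θ' : Fin d → ℝ, DifferentiableAt ℝ fbar (Φ θ') := fun θ' =>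
    (hsmooth (Φ θ') (hz θ')).differentiableAt (by norm_num)
  -- first-order chain rule, globally
  have hfd : fderiv ℝ (fun θ' => fbar (Φ θ'))
      = fun θ' => (fderiv ℝ fbar (Φ θ')).comp (B θ') := by
    funext θ'
    exact ((hdiff1 θ').hasFDerivAt.comp θ' (hΦ θ')).fderiv
  -- derivative of θ' ↦ fderiv fbar (Φ θ')
  set H := fderiv ℝ (fderiv ℝ fbar) (Φ θ) with hHdef
  have hA : HasFDerivAt (fun θ' => fderiv ℝ fbar (Φ θ')) (H.comp (B θ)) θ := by
    have h1 : ContDiffAt ℝ 1 (fderiv ℝ fbar) (Φ θ) :=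
      (hsmooth (Φ θ) (hz θ)).fderiv_right (by norm_num)
    exact (h1.differentiableAt one_ne_zero).hasFDerivAt.comp θ (hΦ θ)
  -- second-order derivative via product rule for composition
  have hC := hA.clm_comp hB
  have hgoal : fderiv ℝ (fun θ' => (fderiv ℝ fbar (Φ θ')).comp (B θ')) θ
      = ((ContinuousLinearMap.compL ℝ (Fin d → ℝ) (Fin d → E) ℝ
            (fderiv ℝ fbar (Φ θ))).comp B'
        + ((ContinuousLinearMap.compL ℝ (Fin d → ℝ) (Fin d → E) ℝ).flip
            (B θ)).comp (H.comp (B θ))) := hC.fderiv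
  have hmain : fderiv ℝ (fderiv ℝ (fun θ' => fbar (Φ θ'))) θ v w
      = fderiv ℝ fbar (Φ θ) (B' v w) + H (B θ v) (B θ w) := by
    rw [hfd, hgoal]
    simp
  -- the correction term vanishes by Euler's relation
  have hcorr : fderiv ℝ fbar (Φ θ) (B' v w) = 0 := by
    have hvec : B' v w = fun ℓ => (-(w ℓ * v ℓ)) • Φ θ ℓ := by
      funext ℓ
      simp [hB'def, hΨdef, hΦdef, smul_sub, smul_add, smul_smul, neg_smul, sub_smul,
        add_smul, mul_comm]
      module
    rw [hvec]
    exact euler d fbar hhom (Φ θ) (hz θ) (hdiff1 θ) _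
  -- identify B θ with the rotated directions
  have hrot : ∀ u : Fin d → ℝ, (B θ u) = fun ℓ => u ℓ • Rrot (Φ θ ℓ) := by
    intro u
    funext ℓ
    rw [hΦdef]
    simp only [hBdef, Lmap_apply, hΨdef]
    rw [Rrot_rot]
  have := hmain
  rw [hcorr, zero_add, hrot v, hrot w] at this
  exact this
end

section
/- Let L : [0,∞) → [0,∞) be decreasing with 0 < ∫₀^∞ L^k(r²) r^j dr < ∞ for k ∈ {1,2} and all j ≥ 0. For a bandwidth h > 0 and nonnegative integer j, lim_{h→0} h^{-(j+1)} ∫₀^π L^k((1−cos θ)/h²) θ^j dθ = 2^{(j+1)/2} ∫₀^∞ L^k(r²) r^j dr. -/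
open MeasureTheory Real Set Filter

private lemma stmt12_auxA (L' : ℝ → ℝ) (k j : ℕ) (I : ℝ)
    (hI : I = ∫ r in Set.Ioi (0:ℝ), L' (r ^ 2) ^ k * r ^ j) :
    (∫ t, Set.indicator (Set.Ioi 0) (fun t => L' (t ^ 2 / 2) ^ k * t ^ j) t)
      = (2:ℝ) ^ (((j:ℝ) + 1) / 2) * I := by
  rw [MeasureTheory.integral_indicator measurableSet_Ioi]
  set g : ℝ → ℝ := fun t => L' (t ^ 2 / 2) ^ k * t ^ j with hg
  have h2 : (0:ℝ) < Real.sqrt 2 := Real.sqrt_pos.mpr two_pos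
  have h1 := MeasureTheory.integral_comp_mul_left_Ioi g 0 h2
  rw [mul_zero] at h1
  have h3 : (fun x => g (Real.sqrt 2 * x)) =
      fun x => Real.sqrt 2 ^ j * (L' (x ^ 2) ^ k * x ^ j) := by
    funext x
    have hx : (Real.sqrt 2 * x) ^ 2 / 2 = x ^ 2 := by
      rw [mul_pow, Real.sq_sqrt (by norm_num : (0:ℝ) ≤ 2)]
      ring
    simp only [hg]
    rw [hx, mul_pow]
    ring
  rw [h3] at h1
  rw [MeasureTheory.integral_const_mul] at h1
  rw [smul_eq_mul, ← hI] at h1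
  have hgI : (∫ x in Set.Ioi (0:ℝ), g x) = Real.sqrt 2 * (Real.sqrt 2 ^ j * I) :=
    calc (∫ x in Set.Ioi (0:ℝ), g x)
        = Real.sqrt 2 * ((Real.sqrt 2)⁻¹ * ∫ x in Set.Ioi (0:ℝ), g x) := by
          rw [← mul_assoc, mul_inv_cancel₀ h2.ne', one_mul]
      _ = Real.sqrt 2 * (Real.sqrt 2 ^ j * I) := by rw [← h1]
  rw [hgI]
  have hpow : Real.sqrt 2 * Real.sqrt 2 ^ j = (2:ℝ) ^ (((j:ℝ) + 1) / 2) := by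
    rw [Real.sqrt_eq_rpow, ← Real.rpow_natCast ((2:ℝ) ^ ((1:ℝ)/2)) j,
      ← Real.rpow_mul (by norm_num), ← Real.rpow_add two_pos]
    ring_nf
  rw [← mul_assoc, hpow]

private lemma stmt12_auxB (L' : ℝ → ℝ) (L : ℝ → ℝ) (hL'eq : ∀ r : ℝ, 0 ≤ r → L' r = L r)
    (k j : ℕ) (h : ℝ) (hh : 0 < h) :
    (∫ θ in Set.Ioc (0:ℝ) Real.pi, L ((1 - Real.cos θ) / h ^ 2) ^ k * θ ^ j) / h ^ (j + 1)
      = ∫ t, Set.indicator (Set.Ioc 0 (Real.pi / h))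
          (fun t => L' ((1 - Real.cos (h * t)) / h ^ 2) ^ k * t ^ j) t := by
  set W : ℝ → ℝ := fun θ => L' ((1 - Real.cos θ) / h ^ 2) ^ k * θ ^ j with hW
  have e1 : (∫ θ in Set.Ioc (0:ℝ) Real.pi, L ((1 - Real.cos θ) / h ^ 2) ^ k * θ ^ j)
      = ∫ θ in Set.Ioc (0:ℝ) Real.pi, W θ := by
    refine setIntegral_congr_fun measurableSet_Ioc (fun θ _ => ?_)
    have : (0:ℝ) ≤ (1 - Real.cos θ) / h ^ 2 :=
      div_nonneg (by nlinarith [Real.cos_le_one θ]) (sq_nonneg h)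
    simp only [hW, hL'eq _ this]
  rw [e1]
  have e2 : (∫ θ in Set.Ioc (0:ℝ) Real.pi, W θ) = ∫ θ in (0:ℝ)..Real.pi, W θ := by
    rw [intervalIntegral.integral_of_le Real.pi_pos.le]
  have e3 : (∫ t in (0:ℝ)..(Real.pi / h), W (h * t)) = h⁻¹ • ∫ x in (0:ℝ)..Real.pi, W x := by
    have := intervalIntegral.integral_comp_mul_left (a := 0) (b := Real.pi / h) W hh.ne'
    rw [this, mul_zero, mul_div_cancel₀ _ hh.ne']
  have e4 : (fun t => W (h * t)) = fun t => h ^ j * (L' ((1 - Real.cos (h * t)) / h ^ 2) ^ k * t ^ j) := by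
    funext t
    simp only [hW, mul_pow]
    ring
  have e5 : (∫ t in (0:ℝ)..(Real.pi / h), W (h * t))
      = h ^ j * ∫ t in (0:ℝ)..(Real.pi / h), L' ((1 - Real.cos (h * t)) / h ^ 2) ^ k * t ^ j := by
    rw [e4, intervalIntegral.integral_const_mul]
  have e6 : (∫ t, Set.indicator (Set.Ioc 0 (Real.pi / h))
        (fun t => L' ((1 - Real.cos (h * t)) / h ^ 2) ^ k * t ^ j) t)
      = ∫ t in (0:ℝ)..(Real.pi / h), L' ((1 - Real.cos (h * t)) / h ^ 2) ^ k * t ^ j := by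
    rw [MeasureTheory.integral_indicator measurableSet_Ioc,
      intervalIntegral.integral_of_le (by positivity : (0:ℝ) ≤ Real.pi / h)]
  rw [e2, e6]
  have hpow : (h:ℝ) ^ (j+1) ≠ 0 := by positivity
  field_simp
  calc (∫ θ in (0:ℝ)..Real.pi, W θ) = h * ∫ t in (0:ℝ)..(Real.pi / h), W (h * t) := by
        rw [e3, smul_eq_mul, ← mul_assoc, mul_inv_cancel₀ hh.ne', one_mul]
    _ = (∫ t in (0:ℝ)..(Real.pi / h), L' ((1 - Real.cos (h * t)) / h ^ 2) ^ k * t ^ j) * h ^ (j+1) := by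
        rw [e5]; ring
  ring

private lemma stmt12_auxC (L' : ℝ → ℝ) (hL'meas : Measurable L') (k j : ℕ)
    (hintL' : IntegrableOn (fun r => L' (r ^ 2) ^ k * r ^ j) (Set.Ioi (0:ℝ))) :
    Integrable (fun t => Set.indicator (Set.Ioi 0)
      (fun t => L' (2 * t ^ 2 / Real.pi ^ 2) ^ k * t ^ j) t) := by
  rw [integrable_indicator_iff measurableSet_Ioi]
  set c : ℝ := Real.sqrt 2 / Real.pi with hc
  have hcpos : 0 < c := div_pos (Real.sqrt_pos.mpr two_pos) Real.pi_pos
  have key : IntegrableOn (fun t => L' ((c * t) ^ 2) ^ k * (c * t) ^ j) (Set.Ioi (0:ℝ)) := by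
    have := (integrableOn_Ioi_comp_mul_left_iff
      (fun r => L' (r ^ 2) ^ k * r ^ j) 0 hcpos).mpr
    rw [mul_zero] at this
    exact this hintL'
  have e : ∀ t : ℝ, (c * t) ^ 2 = 2 * t ^ 2 / Real.pi ^ 2 := by
    intro t
    have h2 : Real.sqrt 2 ^ 2 = 2 := Real.sq_sqrt (by norm_num)
    rw [hc]
    field_simp
    nlinarith [h2]
  have : IntegrableOn (fun t => c ^ j * (L' (2 * t ^ 2 / Real.pi ^ 2) ^ k * t ^ j))
      (Set.Ioi (0:ℝ)) := by
    refine key.congr_fun (fun t _ => ?_) measurableSet_Ioi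
    dsimp only
    rw [e t, mul_pow]
    ring
  have h2 := this.const_mul ((c:ℝ) ^ j)⁻¹
  refine (IntegrableOn.congr_fun h2 (fun t _ => ?_) measurableSet_Ioi)
  rw [← mul_assoc, inv_mul_cancel₀ (by positivity), one_mul]

private lemma stmt12_auxD (L' : ℝ → ℝ) (hL'anti : Antitone L') (hL'nn : ∀ r, 0 ≤ L' r) (k j : ℕ)
    (h : ℝ) (hh : 0 < h) (t : ℝ) :
    ‖Set.indicator (Set.Ioc 0 (Real.pi / h))
        (fun t => L' ((1 - Real.cos (h * t)) / h ^ 2) ^ k * t ^ j) t‖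
      ≤ Set.indicator (Set.Ioi 0) (fun t => L' (2 * t ^ 2 / Real.pi ^ 2) ^ k * t ^ j) t := by
  by_cases ht : t ∈ Set.Ioc 0 (Real.pi / h)
  · rw [Set.indicator_of_mem ht]
    have ht0 : 0 < t := ht.1
    rw [Set.indicator_of_mem (Set.mem_Ioi.mpr ht0)]
    have hhtle : h * t ≤ Real.pi := by
      have := (le_div_iff₀ hh).mp ht.2
      linarith [mul_comm h t]
    have hcos := Real.cos_le_one_sub_mul_cos_sq (x := h * t)
      (by rw [abs_of_nonneg (by positivity)]; exact hhtle)
    have harg : 2 * t ^ 2 / Real.pi ^ 2 ≤ (1 - Real.cos (h * t)) / h ^ 2 := by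
      rw [div_le_div_iff₀ (by positivity) (by positivity)]
      have hpi2 : (0:ℝ) < Real.pi ^ 2 := by positivity
      have h1 : 2 / Real.pi ^ 2 * (h * t) ^ 2 ≤ 1 - Real.cos (h * t) := by linarith
      have h2 : 2 / Real.pi ^ 2 * (h * t) ^ 2 * Real.pi ^ 2 = 2 * (h * t) ^ 2 := by
        field_simp
      nlinarith [mul_le_mul_of_nonneg_right h1 hpi2.le]
    have hmono : L' ((1 - Real.cos (h * t)) / h ^ 2) ≤ L' (2 * t ^ 2 / Real.pi ^ 2) :=
      hL'anti harg
    have hnorm : ‖L' ((1 - Real.cos (h * t)) / h ^ 2) ^ k * t ^ j‖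
        = L' ((1 - Real.cos (h * t)) / h ^ 2) ^ k * t ^ j := by
      rw [Real.norm_eq_abs, abs_of_nonneg]
      exact mul_nonneg (pow_nonneg (hL'nn _) k) (pow_nonneg ht0.le j)
    rw [hnorm]
    exact mul_le_mul_of_nonneg_right (pow_le_pow_left₀ (hL'nn _) hmono k)
      (pow_nonneg ht0.le j)
  · rw [Set.indicator_of_notMem ht, norm_zero]
    exact Set.indicator_nonneg
      (fun t' ht' => mul_nonneg (pow_nonneg (hL'nn _) k) (pow_nonneg (le_of_lt ht') j)) t

private lemma stmt12_auxE (L' : ℝ → ℝ) (hL'anti : Antitone L') (k j : ℕ) :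
    ∀ᵐ t : ℝ, Tendsto
      (fun h => Set.indicator (Set.Ioc 0 (Real.pi / h))
        (fun t => L' ((1 - Real.cos (h * t)) / h ^ 2) ^ k * t ^ j) t)
      (nhdsWithin (0:ℝ) (Set.Ioi 0))
      (nhds (Set.indicator (Set.Ioi 0) (fun t => L' (t ^ 2 / 2) ^ k * t ^ j) t)) := by
  have hD : Set.Countable {x : ℝ | ¬ContinuousAt L' x} := hL'anti.countable_not_continuousAt
  have hN : Set.Countable {t : ℝ | 0 < t ∧ ¬ContinuousAt L' (t ^ 2 / 2)} := by
    refine (hD.image (fun x => Real.sqrt (2 * x))).mono ?_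
    intro t ht
    refine ⟨t ^ 2 / 2, ht.2, ?_⟩
    show Real.sqrt (2 * (t ^ 2 / 2)) = t
    have h2t : 2 * (t ^ 2 / 2) = t ^ 2 := by ring
    rw [h2t, Real.sqrt_sq ht.1.le]
  filter_upwards [hN.ae_notMem volume] with t ht
  by_cases ht0 : 0 < t
  · have hcont : ContinuousAt L' (t ^ 2 / 2) := by
      by_contra hc; exact ht ⟨ht0, hc⟩
    have hslope : Tendsto (fun x : ℝ => Real.sin x / x) (nhdsWithin 0 {x | x ≠ 0}) (nhds 1) := by
      have h := Real.hasDerivAt_sin 0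
      rw [hasDerivAt_iff_tendsto_slope] at h
      simp only [Real.cos_zero] at h
      refine h.congr (fun x => ?_)
      simp [slope_fun_def, Real.sin_zero, div_eq_inv_mul]
    have hx : Tendsto (fun h : ℝ => h * t / 2) (nhdsWithin (0:ℝ) (Set.Ioi 0))
        (nhdsWithin (0:ℝ) {x | x ≠ 0}) := by
      apply tendsto_nhdsWithin_of_tendsto_nhds_of_eventually_within
      · have h0 : Tendsto (fun h : ℝ => h * t / 2) (nhds 0) (nhds 0) := by
          have hc : Continuous (fun h : ℝ => h * t / 2) := by continuity
          have := hc.tendsto (0:ℝ)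
          simpa using this
        exact h0.mono_left nhdsWithin_le_nhds
      · filter_upwards [self_mem_nhdsWithin] with h hh
        have hh' : (0:ℝ) < h := hh
        exact (by positivity : (0:ℝ) < h * t / 2).ne'
    have h1 : Tendsto (fun h : ℝ => Real.sin (h * t / 2) / (h * t / 2))
        (nhdsWithin (0:ℝ) (Set.Ioi 0)) (nhds 1) := hslope.comp hx
    have h2 : Tendsto (fun h : ℝ => t ^ 2 / 2 * (Real.sin (h * t / 2) / (h * t / 2)) ^ 2)
        (nhdsWithin (0:ℝ) (Set.Ioi 0)) (nhds (t ^ 2 / 2)) := by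
      have := tendsto_const_nhds (x := t ^ 2 / 2)
        (f := nhdsWithin (0:ℝ) (Set.Ioi 0)) |>.mul (h1.pow 2)
      simpa using this
    have harg : Tendsto (fun h : ℝ => (1 - Real.cos (h * t)) / h ^ 2)
        (nhdsWithin (0:ℝ) (Set.Ioi 0)) (nhds (t ^ 2 / 2)) := by
      refine h2.congr' ?_
      filter_upwards [self_mem_nhdsWithin] with h hh
      have hident : 1 - Real.cos (h * t) = 2 * Real.sin (h * t / 2) ^ 2 := by
        rw [Real.sin_sq_eq_half_sub]
        ring_nf
      rw [hident]
      have hh' : (h:ℝ) ≠ 0 := (Set.mem_Ioi.mp hh).ne'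
      field_simp
    have hval : Tendsto (fun h : ℝ => L' ((1 - Real.cos (h * t)) / h ^ 2) ^ k * t ^ j)
        (nhdsWithin (0:ℝ) (Set.Ioi 0)) (nhds (L' (t ^ 2 / 2) ^ k * t ^ j)) :=
      ((hcont.tendsto.comp harg).pow k).mul_const _
    rw [Set.indicator_of_mem (Set.mem_Ioi.mpr ht0)]
    refine hval.congr' ?_
    have hmem : Set.Ioo (0:ℝ) (Real.pi / t) ∈ nhdsWithin (0:ℝ) (Set.Ioi 0) :=
      Ioo_mem_nhdsGT_of_mem ⟨le_rfl, div_pos Real.pi_pos ht0⟩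
    filter_upwards [hmem] with h hh
    rw [Set.indicator_of_mem]
    refine ⟨ht0, ?_⟩
    rw [le_div_iff₀ hh.1]
    have := (lt_div_iff₀ ht0).mp hh.2
    linarith [mul_comm h t]
  · rw [Set.indicator_of_notMem (by simpa using ht0)]
    have hzero : ∀ h : ℝ, Set.indicator (Set.Ioc 0 (Real.pi / h))
        (fun t => L' ((1 - Real.cos (h * t)) / h ^ 2) ^ k * t ^ j) t = 0 := fun h =>
      Set.indicator_of_notMem (fun hmem => ht0 hmem.1) _
    simpa [hzero] using tendsto_const_nhds


/-- one-dimensional circular kernel moment limit. Let `L : [0,∞) → [0,∞)` be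
decreasing with `0 < ∫₀^∞ L^k(r²) r^j dr < ∞` for `k ∈ {1,2}` and all `j ≥ 0`. Then for a
bandwidth `h → 0⁺` and nonnegative integer `j`,
`h^{-(j+1)} ∫₀^π L^k((1−cos θ)/h²) θ^j dθ → 2^{(j+1)/2} ∫₀^∞ L^k(r²) r^j dr`. -/
theorem stmt_12 (L : ℝ → ℝ) (hmono : AntitoneOn L (Set.Ici 0)) (hnn : ∀ r, 0 ≤ L r)
    (hint : ∀ k : ℕ, (k = 1 ∨ k = 2) → ∀ j : ℕ,
      MeasureTheory.IntegrableOn (fun r => L (r ^ 2) ^ k * r ^ j) (Set.Ioi (0:ℝ)))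
    (hpos : ∀ k : ℕ, (k = 1 ∨ k = 2) → ∀ j : ℕ,
      0 < ∫ r in Set.Ioi (0:ℝ), L (r ^ 2) ^ k * r ^ j)
    (k : ℕ) (hk : k = 1 ∨ k = 2) (j : ℕ) :
    Filter.Tendsto
      (fun h : ℝ =>
        (∫ θ in Set.Ioc (0:ℝ) Real.pi, L ((1 - Real.cos θ) / h ^ 2) ^ k * θ ^ j) / h ^ (j + 1))
      (nhdsWithin 0 (Set.Ioi 0))
      (nhds ((2:ℝ) ^ (((j:ℝ) + 1) / 2) * ∫ r in Set.Ioi (0:ℝ), L (r ^ 2) ^ k * r ^ j)) := by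
  -- extend L to an antitone function on all of ℝ
  set L' : ℝ → ℝ := fun r => L (max r 0) with hL'def
  have hL'anti : Antitone L' := by
    intro x y hxy
    exact hmono (le_max_right x 0) (le_max_right y 0) (max_le_max hxy le_rfl)
  have hL'nn : ∀ r, 0 ≤ L' r := fun r => hnn _
  have hL'meas : Measurable L' := hL'anti.measurable
  have hL'eq : ∀ r : ℝ, 0 ≤ r → L' r = L r := fun r hr => by
    simp only [hL'def, max_eq_left hr]
  -- the target integral
  set I : ℝ := ∫ r in Set.Ioi (0:ℝ), L (r ^ 2) ^ k * r ^ j with hIdef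
  have hintL' : IntegrableOn (fun r => L' (r ^ 2) ^ k * r ^ j) (Set.Ioi (0:ℝ)) := by
    have := hint k hk j
    refine this.congr_fun (fun r _ => ?_) measurableSet_Ioi
    rw [hL'eq _ (sq_nonneg r)]
  -- the limit function and its integral
  set f : ℝ → ℝ := fun t => Set.indicator (Set.Ioi 0) (fun t => L' (t ^ 2 / 2) ^ k * t ^ j) t
    with hfdef
  -- Step A : ∫ f = 2^((j+1)/2) * I
  have hII : (∫ r in Set.Ioi (0:ℝ), L' (r ^ 2) ^ k * r ^ j) = I := by
    refine setIntegral_congr_fun measurableSet_Ioi (fun r _ => ?_)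
    rw [hL'eq _ (sq_nonneg r)]
  have stepA : (∫ t, f t) = (2:ℝ) ^ (((j:ℝ) + 1) / 2) * I :=
    stmt12_auxA L' k j I (by rw [hII])
  -- the family of functions
  set F : ℝ → ℝ → ℝ := fun h t =>
    Set.indicator (Set.Ioc 0 (Real.pi / h))
      (fun t => L' ((1 - Real.cos (h * t)) / h ^ 2) ^ k * t ^ j) t with hFdef
  -- Step B : for h > 0, the LHS equals ∫ F h
  have stepB : ∀ h : ℝ, 0 < h →
      (∫ θ in Set.Ioc (0:ℝ) Real.pi, L ((1 - Real.cos θ) / h ^ 2) ^ k * θ ^ j) / h ^ (j + 1)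
        = ∫ t, F h t := fun h hh => stmt12_auxB L' L hL'eq k j h hh
  -- the dominating function
  set bound : ℝ → ℝ := fun t =>
    Set.indicator (Set.Ioi 0) (fun t => L' (2 * t ^ 2 / Real.pi ^ 2) ^ k * t ^ j) t
    with hbdef
  have bound_int : Integrable bound := stmt12_auxC L' hL'meas k j hintL'
  have hF_meas : ∀ᶠ h in nhdsWithin (0:ℝ) (Set.Ioi 0), AEStronglyMeasurable (F h) volume := by
    refine Filter.Eventually.of_forall (fun h => ?_)
    refine (Measurable.indicator ?_ measurableSet_Ioc).aestronglyMeasurable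
    exact ((hL'meas.comp (by fun_prop)).pow_const k).mul (measurable_id.pow_const j)
  have h_bound : ∀ᶠ h in nhdsWithin (0:ℝ) (Set.Ioi 0),
      ∀ᵐ t : ℝ, ‖F h t‖ ≤ bound t := by
    filter_upwards [self_mem_nhdsWithin] with h hh
    exact Filter.Eventually.of_forall (fun t => stmt12_auxD L' hL'anti hL'nn k j h hh t)
  have h_lim : ∀ᵐ t : ℝ, Tendsto (fun h => F h t) (nhdsWithin (0:ℝ) (Set.Ioi 0)) (nhds (f t)) :=
    stmt12_auxE L' hL'anti k j
  have main := MeasureTheory.tendsto_integral_filter_of_dominated_convergence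
    (μ := volume) (F := F) (f := f) bound hF_meas h_bound bound_int h_lim
  rw [stepA] at main
  refine main.congr' ?_
  filter_upwards [self_mem_nhdsWithin] with h hh
  exact (stepB h hh).symm
end

section
/- Under the kernel moment condition on L, for the product circular kernel constants c_{h,j,k}(L) = 2^d ∏_{ℓ=1}^d ∫₀^π L^k((1−cos θ_ℓ)/h_ℓ²) θ_ℓ^{j_ℓ} dθ_ℓ, it holds that lim_{h→0} c_{h,j,k}(L)/(h^j ρ(h)) = 2^{(3d+|j|)/2} ∏_{ℓ=1}^d ∫₀^∞ L^k(r²) r^{j_ℓ} dr, where h^j = ∏ h_ℓ^{j_ℓ}, ρ(h) = ∏ h_ℓ, and |j| = Σ j_ℓ. -/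
open MeasureTheory Filter Set

/-- `1 - cos t ≥ (2/π²) t²` on `[0, π]`. -/
lemma aux_cos_ineq {t : ℝ} (h0 : 0 ≤ t) (h1 : t ≤ Real.pi) :
    2 / Real.pi ^ 2 * t ^ 2 ≤ 1 - Real.cos t := by
  have hπ := Real.pi_pos
  have key : 1 - Real.cos t = 2 * Real.sin (t / 2) ^ 2 := by
    have h := Real.sin_sq_eq_half_sub (x := t / 2)
    rw [show 2 * (t / 2) = t by ring] at h
    linarith
  have hsin := Real.mul_le_sin (x := t / 2) (by linarith) (by linarith)
  have hnn' : 0 ≤ 2 / Real.pi * (t / 2) := by positivity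
  have hsq : (2 / Real.pi * (t / 2)) ^ 2 ≤ Real.sin (t / 2) ^ 2 :=
    pow_le_pow_left₀ hnn' hsin 2
  have heq : 2 / Real.pi ^ 2 * t ^ 2 = 2 * (2 / Real.pi * (t / 2)) ^ 2 := by
    field_simp
  rw [heq, key]; linarith

/-- One–dimensional version: for antitone nonnegative `L`,
`(∫_{(0,π]} L((1-cos θ)/h²)^k θ^j dθ)/h^{j+1} → √2^{j+1} ∫_{(0,∞)} L(r²)^k r^j dr`
as `h → 0⁺`. -/
lemma aux_one_dim (L : ℝ → ℝ) (hmono : Antitone L) (hnn : ∀ r, 0 ≤ L r)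
    (k j : ℕ)
    (hint : IntegrableOn (fun r => L (r ^ 2) ^ k * r ^ j) (Ioi (0:ℝ))) :
    Tendsto (fun h : ℝ =>
        (∫ θ in Ioc (0:ℝ) Real.pi, L ((1 - Real.cos θ) / h ^ 2) ^ k * θ ^ j) / h ^ (j+1))
      (nhdsWithin 0 (Ioi 0))
      (nhds (Real.sqrt 2 ^ (j+1) * ∫ r in Ioi (0:ℝ), L (r ^ 2) ^ k * r ^ j)) := by
  have hmeas : Measurable L := hmono.measurable
  have hπ := Real.pi_pos
  set g : ℝ → ℝ → ℝ := fun h u => L ((1 - Real.cos (h * u)) / h ^ 2) ^ k * u ^ j with hg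
  set F : ℝ → ℝ → ℝ := fun h => (Ioc (0:ℝ) (Real.pi / h)).indicator (g h) with hF
  -- Step (i): for h > 0, the normalized integral equals ∫_{Ioi 0} F h
  have step1 : ∀ h : ℝ, 0 < h →
      (∫ θ in Ioc (0:ℝ) Real.pi, L ((1 - Real.cos θ) / h ^ 2) ^ k * θ ^ j) / h ^ (j+1)
        = ∫ u in Ioi (0:ℝ), F h u := by
    intro h hh
    have hne : h ≠ 0 := hh.ne'
    set f : ℝ → ℝ := fun θ => L ((1 - Real.cos θ) / h ^ 2) ^ k * θ ^ j with hf
    have e1 : (∫ θ in Ioc (0:ℝ) Real.pi, f θ) = ∫ θ in (0:ℝ)..Real.pi, f θ :=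
      (intervalIntegral.integral_of_le hπ.le).symm
    have e2 : (∫ u in (0:ℝ)..(Real.pi / h), f (h * u)) = h⁻¹ • ∫ θ in (0:ℝ)..Real.pi, f θ := by
      have := intervalIntegral.integral_comp_mul_left (a := (0:ℝ)) (b := Real.pi / h)
        (f := f) (c := h) hne
      rw [mul_zero, show h * (Real.pi / h) = Real.pi by field_simp] at this
      exact this
    have e3 : (∫ u in (0:ℝ)..(Real.pi / h), f (h * u))
        = h ^ j * ∫ u in (0:ℝ)..(Real.pi / h), g h u := by
      rw [← intervalIntegral.integral_const_mul]
      refine intervalIntegral.integral_congr fun u _ => ?_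
      simp only [hf, hg, mul_pow]
      ring
    have e4 : (∫ u in (0:ℝ)..(Real.pi / h), g h u) = ∫ u in Ioc (0:ℝ) (Real.pi / h), g h u :=
      intervalIntegral.integral_of_le (by positivity)
    have e5 : (∫ u in Ioc (0:ℝ) (Real.pi / h), g h u) = ∫ u in Ioi (0:ℝ), F h u := by
      rw [hF, integral_indicator measurableSet_Ioc, Measure.restrict_restrict measurableSet_Ioc,
        inter_eq_left.mpr Ioc_subset_Ioi_self]
    have : (∫ θ in Ioc (0:ℝ) Real.pi, f θ) = h ^ (j+1) * ∫ u in Ioi (0:ℝ), F h u := by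
      rw [e1]
      have := e2
      rw [e3, e4, e5] at this
      have h2 : (∫ θ in (0:ℝ)..Real.pi, f θ) = h * (h ^ j * ∫ u in Ioi (0:ℝ), F h u) := by
        rw [this, smul_eq_mul]; field_simp
      rw [h2, pow_succ]; ring
    rw [this]
    field_simp
  -- the dominating function
  set c : ℝ := Real.sqrt 2 / Real.pi with hc
  have hcpos : 0 < c := by positivity
  set bound : ℝ → ℝ := fun u => L ((c * u) ^ 2) ^ k * u ^ j with hbound
  have hbint : IntegrableOn bound (Ioi (0:ℝ)) := by
    have h1 : IntegrableOn (fun u => L ((c * u) ^ 2) ^ k * (c * u) ^ j) (Ioi (0:ℝ)) := by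
      have := (integrableOn_Ioi_comp_mul_left_iff
        (fun r => L (r ^ 2) ^ k * r ^ j) 0 hcpos).2 (by rwa [mul_zero])
      exact this
    have h2 := h1.const_mul ((c ^ j)⁻¹)
    refine h2.congr (Filter.Eventually.of_forall fun u => ?_)
    simp only [hbound, mul_pow]
    field_simp
  -- measurability
  have hFmeas : ∀ h : ℝ, AEStronglyMeasurable (F h) (volume.restrict (Ioi (0:ℝ))) := by
    intro h
    have hg' : Measurable (g h) := by
      have : Measurable fun u : ℝ => (1 - Real.cos (h * u)) / h ^ 2 := by
        fun_prop
      exact ((hmeas.comp this).pow_const k).mul (measurable_id.pow_const j)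
    exact ((hg'.indicator measurableSet_Ioc).aestronglyMeasurable)
  -- domination
  have hdom : ∀ᶠ h in nhdsWithin (0:ℝ) (Ioi 0),
      ∀ᵐ u ∂(volume.restrict (Ioi (0:ℝ))), ‖F h u‖ ≤ bound u := by
    filter_upwards [self_mem_nhdsWithin] with h (hh : 0 < h)
    refine (ae_restrict_mem measurableSet_Ioi).mono fun u (hu0' : u ∈ Ioi (0:ℝ)) => ?_
    by_cases hu : u ∈ Ioc (0:ℝ) (Real.pi / h)
    · have hu0 : 0 < u := hu.1
      have hupi : h * u ≤ Real.pi := by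
        calc h * u ≤ h * (Real.pi / h) := mul_le_mul_of_nonneg_left hu.2 hh.le
          _ = Real.pi := by field_simp
      have ht0 : 0 ≤ h * u := by positivity
      have hineq : (c * u) ^ 2 ≤ (1 - Real.cos (h * u)) / h ^ 2 := by
        have := aux_cos_ineq ht0 hupi
        have hcu : (c * u) ^ 2 = 2 / Real.pi ^ 2 * u ^ 2 := by
          rw [hc, mul_pow, div_pow, Real.sq_sqrt (by norm_num : (0:ℝ) ≤ 2)]
        rw [hcu, le_div_iff₀ (by positivity : (0:ℝ) < h ^ 2)]
        calc 2 / Real.pi ^ 2 * u ^ 2 * h ^ 2 = 2 / Real.pi ^ 2 * (h * u) ^ 2 := by ring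
          _ ≤ 1 - Real.cos (h * u) := this
      have hL : L ((1 - Real.cos (h * u)) / h ^ 2) ≤ L ((c * u) ^ 2) := hmono hineq
      have hFu : F h u = g h u := indicator_of_mem hu _
      rw [hFu]
      have hgnn : 0 ≤ g h u := mul_nonneg (pow_nonneg (hnn _) _) (pow_nonneg hu0.le _)
      rw [Real.norm_of_nonneg hgnn]
      exact mul_le_mul_of_nonneg_right (pow_le_pow_left₀ (hnn _) hL k)
        (pow_nonneg hu0.le _)
    · have : F h u = 0 := indicator_of_notMem hu _
      rw [this, norm_zero]
      exact mul_nonneg (pow_nonneg (hnn _) _) (pow_nonneg (le_of_lt hu0') _)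
  -- pointwise limit
  have hlim : ∀ᵐ u ∂(volume.restrict (Ioi (0:ℝ))),
      Tendsto (fun h => F h u) (nhdsWithin (0:ℝ) (Ioi 0))
        (nhds (L (u ^ 2 / 2) ^ k * u ^ j)) := by
    set D : Set ℝ := {x | ¬ ContinuousAt L x} with hD
    have hDc : D.Countable := hmono.countable_not_continuousAt
    set S : Set ℝ := {u : ℝ | 0 < u ∧ u ^ 2 / 2 ∈ D} with hS
    have hSc : S.Countable := by
      refine (hDc.image (fun a => Real.sqrt (2 * a))).mono ?_
      rintro u ⟨hu0, huD⟩
      refine ⟨u ^ 2 / 2, huD, ?_⟩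
      show Real.sqrt (2 * (u ^ 2 / 2)) = u
      rw [show 2 * (u ^ 2 / 2) = u ^ 2 by ring, Real.sqrt_sq hu0.le]
    have hS0 : volume S = 0 := hSc.measure_zero _
    have h1 : ∀ᵐ u : ℝ, u ∉ S := measure_eq_zero_iff_ae_notMem.mp hS0
    filter_upwards [ae_restrict_mem measurableSet_Ioi, ae_restrict_of_ae h1] with u hu hnS
    have hu0 : (0:ℝ) < u := hu
    have hcont : ContinuousAt L (u ^ 2 / 2) := by
      by_contra hcon
      exact hnS ⟨hu0, hcon⟩
    -- the argument tends to u²/2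
    have hslope : Tendsto (fun y : ℝ => Real.sin y / y) (nhdsWithin 0 {(0:ℝ)}ᶜ) (nhds 1) := by
      have h := Real.hasDerivAt_sin 0
      rw [Real.cos_zero] at h
      have h2 := hasDerivAt_iff_tendsto_slope.mp h
      refine h2.congr fun y => ?_
      simp [slope_def_field]
    have hmap : Tendsto (fun h : ℝ => h * u / 2) (nhdsWithin (0:ℝ) (Ioi 0))
        (nhdsWithin 0 {(0:ℝ)}ᶜ) := by
      rw [tendsto_nhdsWithin_iff]
      constructor
      · have : Tendsto (fun h : ℝ => h * u / 2) (nhds 0) (nhds (0 * u / 2)) :=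
          (tendsto_id.mul_const u).div_const 2
        rw [zero_mul, zero_div] at this
        exact this.mono_left nhdsWithin_le_nhds
      · filter_upwards [self_mem_nhdsWithin] with h (hh : 0 < h)
        exact (ne_of_gt (by positivity) : h * u / 2 ≠ 0)
    have harg : Tendsto (fun h : ℝ => (1 - Real.cos (h * u)) / h ^ 2)
        (nhdsWithin (0:ℝ) (Ioi 0)) (nhds (u ^ 2 / 2)) := by
      have hq : Tendsto (fun h : ℝ => (Real.sin (h * u / 2) / (h * u / 2)) ^ 2 * (u ^ 2 / 2))
          (nhdsWithin (0:ℝ) (Ioi 0)) (nhds (u ^ 2 / 2)) := by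
        have := ((hslope.comp hmap).pow 2).mul_const (u ^ 2 / 2)
        simpa using this
      refine hq.congr' ?_
      filter_upwards [self_mem_nhdsWithin] with h (hh : 0 < h)
      have hne : h ≠ 0 := hh.ne'
      have hune : u ≠ 0 := hu0.ne'
      have key : 1 - Real.cos (h * u) = 2 * Real.sin (h * u / 2) ^ 2 := by
        have hx := Real.sin_sq_eq_half_sub (x := h * u / 2)
        rw [show 2 * (h * u / 2) = h * u by ring] at hx
        linarith
      rw [key]
      field_simp
    have hL : Tendsto (fun h : ℝ => L ((1 - Real.cos (h * u)) / h ^ 2))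
        (nhdsWithin (0:ℝ) (Ioi 0)) (nhds (L (u ^ 2 / 2))) := hcont.tendsto.comp harg
    have hgl : Tendsto (fun h : ℝ => g h u) (nhdsWithin (0:ℝ) (Ioi 0))
        (nhds (L (u ^ 2 / 2) ^ k * u ^ j)) := (hL.pow k).mul_const _
    refine hgl.congr' ?_
    have hmem : Ioo (0:ℝ) (Real.pi / u) ∈ nhdsWithin (0:ℝ) (Ioi 0) :=
      Ioo_mem_nhdsGT_of_mem ⟨le_refl 0, by positivity⟩
    filter_upwards [hmem] with h hh
    have hh0 : 0 < h := hh.1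
    have hupi : u ≤ Real.pi / h := by
      rw [le_div_iff₀ hh0]
      have := hh.2
      rw [lt_div_iff₀ hu0] at this
      linarith [this]
    show g h u = F h u
    simp only [hF]
    rw [Set.indicator_of_mem (show u ∈ Ioc (0:ℝ) (Real.pi / h) from ⟨hu0, hupi⟩) (g h)]
  -- dominated convergence
  have hDCT : Tendsto (fun h : ℝ => ∫ u in Ioi (0:ℝ), F h u)
      (nhdsWithin (0:ℝ) (Ioi 0))
      (nhds (∫ u in Ioi (0:ℝ), L (u ^ 2 / 2) ^ k * u ^ j)) :=
    tendsto_integral_filter_of_dominated_convergence bound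
      (Eventually.of_forall hFmeas) hdom hbint hlim
  -- value of the limit integral
  have hval : (∫ u in Ioi (0:ℝ), L (u ^ 2 / 2) ^ k * u ^ j)
      = Real.sqrt 2 ^ (j+1) * ∫ r in Ioi (0:ℝ), L (r ^ 2) ^ k * r ^ j := by
    set b : ℝ := (Real.sqrt 2)⁻¹ with hb
    have hbpos : 0 < b := by positivity
    have hbne : b ≠ 0 := hbpos.ne'
    have hs2 : Real.sqrt 2 ^ 2 = 2 := Real.sq_sqrt (by norm_num)
    have h1 := integral_comp_mul_left_Ioi (fun r => L (r ^ 2) ^ k * r ^ j) 0 hbpos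
    rw [mul_zero] at h1
    have h2 : (∫ u in Ioi (0:ℝ), L ((b * u) ^ 2) ^ k * (b * u) ^ j)
        = b ^ j * ∫ u in Ioi (0:ℝ), L (u ^ 2 / 2) ^ k * u ^ j := by
      rw [← integral_const_mul]
      refine setIntegral_congr_fun measurableSet_Ioi fun u _ => ?_
      have : (b * u) ^ 2 = u ^ 2 / 2 := by
        rw [mul_pow, hb, inv_pow, hs2]; ring
      rw [this, mul_pow]
      ring
    rw [h2] at h1
    have hX : (∫ u in Ioi (0:ℝ), L (u ^ 2 / 2) ^ k * u ^ j)
        = (b ^ j)⁻¹ * (b⁻¹ * ∫ r in Ioi (0:ℝ), L (r ^ 2) ^ k * r ^ j) := by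
      rw [smul_eq_mul] at h1
      field_simp at h1 ⊢
      linarith [h1]
    rw [hX, hb, inv_inv, inv_pow, inv_inv, pow_succ]
    ring
  rw [hval] at hDCT
  refine hDCT.congr' ?_
  filter_upwards [self_mem_nhdsWithin] with h (hh : 0 < h)
  exact (step1 h hh).symm

/-- multivariate kernel moment limit. With
`c_{h,j,k}(L) = 2^d ∏_ℓ ∫₀^π L^k((1−cos θ_ℓ)/h_ℓ²) θ_ℓ^{j_ℓ} dθ_ℓ`, as the bandwidth
vector `h → 0` (componentwise positive),
`c_{h,j,k}(L)/(h^j ρ(h)) → 2^{(3d+|j|)/2} ∏_ℓ ∫₀^∞ L^k(r²) r^{j_ℓ} dr`,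
where `h^j = ∏ h_ℓ^{j_ℓ}`, `ρ(h) = ∏ h_ℓ` and `|j| = Σ j_ℓ`. -/
theorem stmt_13 (d : ℕ) (L : ℝ → ℝ)
    (hmono : AntitoneOn L (Set.Ici 0)) (hnn : ∀ r, 0 ≤ L r)
    (hint : ∀ k : ℕ, (k = 1 ∨ k = 2) → ∀ j : ℕ,
      MeasureTheory.IntegrableOn (fun r => L (r ^ 2) ^ k * r ^ j) (Set.Ioi (0:ℝ)))
    (hpos : ∀ k : ℕ, (k = 1 ∨ k = 2) → ∀ j : ℕ,
      0 < ∫ r in Set.Ioi (0:ℝ), L (r ^ 2) ^ k * r ^ j)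
    (k : ℕ) (hk : k = 1 ∨ k = 2) (j : Fin d → ℕ) :
    Filter.Tendsto
      (fun h : Fin d → ℝ =>
        ((2:ℝ) ^ d *
            ∏ ℓ, ∫ θ in Set.Ioc (0:ℝ) Real.pi,
              L ((1 - Real.cos θ) / (h ℓ) ^ 2) ^ k * θ ^ (j ℓ)) /
          ((∏ ℓ, (h ℓ) ^ (j ℓ)) * ∏ ℓ, h ℓ))
      (nhdsWithin 0 {h : Fin d → ℝ | ∀ ℓ, 0 < h ℓ})
      (nhds ((2:ℝ) ^ (((3 * d + ∑ ℓ, j ℓ : ℕ) : ℝ) / 2) *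
        ∏ ℓ, ∫ r in Set.Ioi (0:ℝ), L (r ^ 2) ^ k * r ^ (j ℓ))) := by
  classical
  -- replace `L` with its (globally antitone) extension `Lt x = L (max x 0)`
  set Lt : ℝ → ℝ := fun x => L (max x 0) with hLt
  have hmonoT : Antitone Lt := fun a b hab =>
    hmono (le_max_right a 0) (le_max_right b 0) (max_le_max hab le_rfl)
  have hnnT : ∀ r, 0 ≤ Lt r := fun r => hnn _
  have hrw2 : ∀ m : ℕ, (∫ r in Set.Ioi (0:ℝ), L (r ^ 2) ^ k * r ^ m)
      = ∫ r in Set.Ioi (0:ℝ), Lt (r ^ 2) ^ k * r ^ m := by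
    intro m; congr 1; funext r
    simp [hLt, max_eq_left (sq_nonneg r)]
  have hrw1 : ∀ (t : ℝ) (m : ℕ),
      (∫ θ in Set.Ioc (0:ℝ) Real.pi, L ((1 - Real.cos θ) / t ^ 2) ^ k * θ ^ m)
        = ∫ θ in Set.Ioc (0:ℝ) Real.pi, Lt ((1 - Real.cos θ) / t ^ 2) ^ k * θ ^ m := by
    intro t m; congr 1; funext θ
    have hnn' : 0 ≤ (1 - Real.cos θ) / t ^ 2 :=
      div_nonneg (by linarith [Real.cos_le_one θ]) (sq_nonneg t)
    simp [hLt, max_eq_left hnn']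
  have hintT : ∀ m : ℕ, MeasureTheory.IntegrableOn
      (fun r => Lt (r ^ 2) ^ k * r ^ m) (Set.Ioi (0:ℝ)) := by
    intro m
    have : (fun r : ℝ => Lt (r ^ 2) ^ k * r ^ m) = fun r => L (r ^ 2) ^ k * r ^ m := by
      funext r; simp [hLt, max_eq_left (sq_nonneg r)]
    rw [this]; exact hint k hk m
  simp only [hrw1, hrw2]
  -- rewrite the function as a constant times a product of one-dimensional quotients
  have hfun : ∀ h : Fin d → ℝ,
      ((2:ℝ) ^ d *
            ∏ ℓ, ∫ θ in Set.Ioc (0:ℝ) Real.pi,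
              Lt ((1 - Real.cos θ) / (h ℓ) ^ 2) ^ k * θ ^ (j ℓ)) /
          ((∏ ℓ, (h ℓ) ^ (j ℓ)) * ∏ ℓ, h ℓ)
      = (2:ℝ) ^ d * ∏ ℓ,
          ((∫ θ in Set.Ioc (0:ℝ) Real.pi,
              Lt ((1 - Real.cos θ) / (h ℓ) ^ 2) ^ k * θ ^ (j ℓ)) / (h ℓ) ^ (j ℓ + 1)) := by
    intro h
    rw [Finset.prod_div_distrib, ← mul_div_assoc]
    congr 1
    rw [← Finset.prod_mul_distrib]
    exact Finset.prod_congr rfl fun ℓ _ => (pow_succ _ _).symm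
  -- constant identity
  have hs2 : Real.sqrt 2 ^ 2 = 2 := Real.sq_sqrt (by norm_num)
  have hconst : (2:ℝ) ^ (((3 * d + ∑ ℓ, j ℓ : ℕ) : ℝ) / 2)
      = (2:ℝ) ^ d * ∏ ℓ, Real.sqrt 2 ^ (j ℓ + 1) := by
    have h1 : (∏ ℓ, Real.sqrt 2 ^ (j ℓ + 1)) = Real.sqrt 2 ^ (∑ ℓ, (j ℓ + 1)) :=
      Finset.prod_pow_eq_pow_sum _ _ _
    have h2 : (∑ ℓ, (j ℓ + 1)) = (∑ ℓ, j ℓ) + d := by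
      rw [Finset.sum_add_distrib]
      simp [Finset.card_univ]
    have h3 : (2:ℝ) ^ d = Real.sqrt 2 ^ (2 * d) := by
      rw [pow_mul, hs2]
    have h4 : (2:ℝ) ^ (((3 * d + ∑ ℓ, j ℓ : ℕ) : ℝ) / 2)
        = Real.sqrt 2 ^ (3 * d + ∑ ℓ, j ℓ) := by
      rw [Real.sqrt_eq_rpow, ← Real.rpow_natCast ((2:ℝ) ^ ((1:ℝ)/2)) (3 * d + ∑ ℓ, j ℓ),
        ← Real.rpow_mul (by norm_num : (0:ℝ) ≤ 2)]
      congr 1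
      ring
    rw [h4, h1, h2, h3, ← pow_add]
    congr 1
    ring
  have hconst2 : (2:ℝ) ^ (((3 * d + ∑ ℓ, j ℓ : ℕ) : ℝ) / 2) *
        ∏ ℓ, ∫ r in Set.Ioi (0:ℝ), Lt (r ^ 2) ^ k * r ^ (j ℓ)
      = (2:ℝ) ^ d * ∏ ℓ, (Real.sqrt 2 ^ (j ℓ + 1) *
          ∫ r in Set.Ioi (0:ℝ), Lt (r ^ 2) ^ k * r ^ (j ℓ)) := by
    rw [hconst, Finset.prod_mul_distrib]
    ring
  rw [hconst2]
  refine Tendsto.congr (fun h => (hfun h).symm) ?_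
  refine Tendsto.const_mul _ ?_
  refine tendsto_finset_prod _ fun ℓ _ => ?_
  have hproj : Tendsto (fun h : Fin d → ℝ => h ℓ)
      (nhdsWithin 0 {h : Fin d → ℝ | ∀ ℓ, 0 < h ℓ}) (nhdsWithin (0:ℝ) (Set.Ioi 0)) := by
    rw [tendsto_nhdsWithin_iff]
    constructor
    · have := (continuous_apply ℓ).tendsto (0 : Fin d → ℝ)
      simpa using this.mono_left nhdsWithin_le_nhds
    · filter_upwards [self_mem_nhdsWithin] with x hx
      exact hx ℓ
  exact (aux_one_dim Lt hmonoT hnnT k (j ℓ) (hintT (j ℓ))).comp hproj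
end
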